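/- For markets with at least two workers and two firms, the worker-proposing deferred acceptance mechanism is not strategy-proof: there exists a preference profile and a firm f with a misreport such that f is matched under the misreport profile to a worker it strictly prefers (under its true preferences) to its partner under truthful reporting. -/

import Mathlib

/- Preferences of a worker: a strict order over firms together with the outside
option ⊥ (`none`), encoded by a rank equivalence (higher rank = more preferred). -/
abbrev WPref (m : ℕ) := Option (Fin m) ≃ Fin (m + 1)
abbrev FPref (n : ℕ) := Option (Fin n) ≃ Fin (n + 1)

attribute [local instance] Classical.propDecidable

/-- State of the worker-proposing deferred-acceptance algorithm: each worker's
set of remaining (not-yet-rejecting) firms, and each firm's tentative hold. -/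
structure DAState (n m : ℕ) where
  rem : Fin n → Finset (Fin m)
  hold : Fin m → Option (Fin n)

/-- The proposal of worker `w`: if unmatched, its most preferred remaining firm. -/
noncomputable def proposal {n m : ℕ} (pw : Fin n → WPref m) (s : DAState n m) (w : Fin n) :
    Option (Fin m) :=
  if ∀ f, s.hold f ≠ some w then (s.rem w).toList.argmax (fun f => pw w (some f)) else none

/-- One round of worker-proposing deferred acceptance: every unmatched worker proposes
to its best remaining firm, every firm tentatively holds the best acceptable worker among
its current hold and the new proposals, and rejected workers delete the rejecting firm. -/
noncomputable def daStep {n m : ℕ} (pw : Fin n → WPref m) (fp : Fin m → FPref n)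
    (s : DAState n m) : DAState n m :=
  let newHold : Fin m → Option (Fin n) := fun f =>
    ((Finset.univ.filter fun w => proposal pw s w = some f ∧ fp f (some w) > fp f none) ∪
      (Finset.univ.filter fun w => s.hold f = some w)).toList.argmax fun w => fp f (some w)
  { rem := fun w => (s.rem w).filter fun f => ¬(proposal pw s w = some f ∧ newHold f ≠ some w)
    hold := newHold }

/-- Initial state: every worker's list is its set of acceptable firms, no firm holds anyone. -/
noncomputable def daInit {n m : ℕ} (pw : Fin n → WPref m) : DAState n m :=
  { rem := fun w => Finset.univ.filter fun f => pw w (some f) > pw w none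
    hold := fun _ => none }

noncomputable def daRun {n m : ℕ} (pw : Fin n → WPref m) (fp : Fin m → FPref n) (k : ℕ) :
    DAState n m :=
  (daStep pw fp)^[k] (daInit pw)

/-- The final state of worker-proposing deferred acceptance. -/
noncomputable def daFinal {n m : ℕ} (pw : Fin n → WPref m) (fp : Fin m → FPref n) :
    DAState n m :=
  daRun pw fp (n * m + 1)

private lemma DAState.ext' {n m : ℕ} {s t : DAState n m} (h1 : s.rem = t.rem)
    (h2 : s.hold = t.hold) : s = t := by
  cases s; cases t; simp_all

private lemma argmax_irrel {α β : Type*} [Preorder β]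
    {i1 i2 : DecidableRel fun a b : β => a < b} (f : α → β) (l : List α) :
    @List.argmax α β _ i1 f l = @List.argmax α β _ i2 f l := by
  have : i1 = i2 := by funext a b; exact Subsingleton.elim _ _
  rw [this]

private lemma argmax_eq_some_of {α β : Type*} [LinearOrder β]
    [DecidableRel fun a b : β => a < b] {l : List α} {f : α → β}
    (hinj : Function.Injective f) {a : α} (ha : a ∈ l)
    (hmax : ∀ b ∈ l, f b ≤ f a) : l.argmax f = some a := by
  cases h : l.argmax f with
  | none =>
    rw [List.argmax_eq_none] at h
    simp [h] at ha
  | some x =>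
    have hx : x ∈ l.argmax f := Option.mem_def.mpr h
    have hxl : x ∈ l := List.argmax_mem hx
    have hx2 : x ∈ @List.argmax α β _ LinearOrder.toDecidableLT f l := by
      rw [Option.mem_def, ← argmax_irrel f l]; exact h
    have h1 : f a ≤ f x := List.le_of_mem_argmax ha hx2
    have h2 : f x ≤ f a := hmax x hxl
    rw [hinj (le_antisymm h2 h1)]

private lemma proposal_eq_some {n m : ℕ} (pw : Fin n → WPref m) (s : DAState n m) (w : Fin n)
    (t : Fin m) (hun : ∀ f, s.hold f ≠ some w) (ht : t ∈ s.rem w)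
    (hmax : ∀ f ∈ s.rem w, (pw w (some f) : Fin (m + 1)) ≤ pw w (some t)) :
    proposal pw s w = some t := by
  rw [proposal, if_pos hun]
  refine argmax_eq_some_of (l := (s.rem w).toList) (f := fun f => pw w (some f))
    (fun a b h => Option.some_injective _ ((pw w).injective h))
    (a := t) (by simpa using ht) (fun b hb => hmax b (by simpa using hb))

private lemma proposal_eq_none_held {n m : ℕ} (pw : Fin n → WPref m) (s : DAState n m)
    (w : Fin n) (f : Fin m) (h : s.hold f = some w) : proposal pw s w = none := by
  rw [proposal, if_neg]
  push_neg
  exact ⟨f, h⟩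

private lemma proposal_eq_none_empty {n m : ℕ} (pw : Fin n → WPref m) (s : DAState n m)
    (w : Fin n) (h : s.rem w = ∅) : proposal pw s w = none := by
  rw [proposal]
  split
  · rw [h]; simp
  · rfl

private lemma daStep_hold {n m : ℕ} (pw : Fin n → WPref m) (fp : Fin m → FPref n)
    (s : DAState n m) (f : Fin m) :
    (daStep pw fp s).hold f =
      ((Finset.univ.filter fun w => proposal pw s w = some f ∧ fp f (some w) > fp f none) ∪
        (Finset.univ.filter fun w => s.hold f = some w)).toList.argmax
          (fun w => fp f (some w)) := rfl

private lemma daStep_rem {n m : ℕ} (pw : Fin n → WPref m) (fp : Fin m → FPref n)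
    (s : DAState n m) (w : Fin n) :
    (daStep pw fp s).rem w =
      (s.rem w).filter
        (fun f => ¬(proposal pw s w = some f ∧ (daStep pw fp s).hold f ≠ some w)) := rfl

private lemma daStep_hold_eq_some {n m : ℕ} (pw : Fin n → WPref m) (fp : Fin m → FPref n)
    (s : DAState n m) (f : Fin m) (a : Fin n)
    (ha : (proposal pw s a = some f ∧ fp f (some a) > fp f none) ∨ s.hold f = some a)
    (hmax : ∀ b, ((proposal pw s b = some f ∧ fp f (some b) > fp f none) ∨ s.hold f = some b) →
      (fp f (some b) : Fin (n + 1)) ≤ fp f (some a)) :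
    (daStep pw fp s).hold f = some a := by
  rw [daStep_hold]
  refine argmax_eq_some_of
    (l := ((Finset.univ.filter fun w => proposal pw s w = some f ∧ fp f (some w) > fp f none) ∪
      (Finset.univ.filter fun w => s.hold f = some w)).toList)
    (f := fun w => fp f (some w))
    (fun x y h => Option.some_injective _ ((fp f).injective h)) (a := a)
    (by simp only [Finset.mem_toList, Finset.mem_union, Finset.mem_filter,
          Finset.mem_univ, true_and]; exact ha)
    (fun b hb => hmax b (by simpa using hb))

private lemma daStep_hold_eq_none {n m : ℕ} (pw : Fin n → WPref m) (fp : Fin m → FPref n)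
    (s : DAState n m) (f : Fin m)
    (hp : ∀ w, ¬(proposal pw s w = some f ∧ fp f (some w) > fp f none))
    (hh : s.hold f = none) :
    (daStep pw fp s).hold f = none := by
  rw [daStep_hold]
  have he : ((Finset.univ.filter fun w => proposal pw s w = some f ∧ fp f (some w) > fp f none) ∪
      (Finset.univ.filter fun w => s.hold f = some w)) = ∅ := by
    ext w
    simp [hp w, hh]
  rw [he, Finset.toList_empty]
  exact List.argmax_nil _

private lemma daStep_rem_unchanged {n m : ℕ} (pw : Fin n → WPref m) (fp : Fin m → FPref n)
    (s : DAState n m) (w : Fin n)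
    (h : ∀ f ∈ s.rem w, ¬(proposal pw s w = some f ∧ (daStep pw fp s).hold f ≠ some w)) :
    (daStep pw fp s).rem w = s.rem w := by
  rw [daStep_rem]
  exact Finset.filter_true_of_mem h

/-- For markets with at least two workers and two firms, worker-proposing deferred
acceptance is not strategy-proof: there is a preference profile and a firm `f` with a
misreport such that `f` is matched, under the misreport profile, to a worker it strictly
prefers (under its true preference) to its partner under truthful reporting. -/
theorem da_not_strategyproof (n m : ℕ) (hn : 2 ≤ n) (hm : 2 ≤ m) :
    ∃ (pw : Fin n → WPref m) (fp : Fin m → FPref n) (f : Fin m) (e' : FPref n),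
      fp f ((daFinal pw (Function.update fp f e')).hold f) >
        fp f ((daFinal pw fp).hold f) := by
  have hn0 : 0 < n := by omega
  have hm0 : 0 < m := by omega
  set i0 : Fin n := ⟨0, hn0⟩ with hi0
  set i1 : Fin n := ⟨1, by omega⟩ with hi1
  set j0 : Fin m := ⟨0, hm0⟩ with hj0
  set j1 : Fin m := ⟨1, by omega⟩ with hj1
  have hne01 : i0 ≠ i1 := by simp [hi0, hi1, Fin.ext_iff]
  have hnej : j0 ≠ j1 := by simp [hj0, hj1, Fin.ext_iff]
  -- worker preferences
  set PB : WPref m := (Equiv.optionCongr Fin.revPerm).trans (finSuccEquiv m).symm with hPB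
  set P1 : WPref m := (Equiv.swap (some j0) (some j1)).trans PB with hP1
  set PU : WPref m := ((finSuccEquiv m).symm).trans (Equiv.swap 0 (Fin.last m)) with hPU
  set pw : Fin n → WPref m := fun w => if w = i0 then PB else if w = i1 then P1 else PU with hpw
  -- firm preferences
  set FB : FPref n := (Equiv.optionCongr Fin.revPerm).trans (finSuccEquiv n).symm with hFB
  set F0 : FPref n := (Equiv.swap (some i0) (some i1)).trans FB with hF0
  set fp : Fin m → FPref n := fun f => if f = j0 then F0 else FB with hfp
  set e' : FPref n := (Equiv.swap (some i0) (none : Option (Fin n))).trans F0 with he'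
  refine ⟨pw, fp, j0, e', ?_⟩
  set fp' := Function.update fp j0 e' with hfp'
  -- evaluation facts
  have hPB_some : ∀ j : Fin m, PB (some j) = (Fin.rev j).succ := by
    intro j; simp [hPB, finSuccEquiv_symm_some]
  have hPB_none : PB none = 0 := by
    simp [hPB, finSuccEquiv_symm_none]
  have hP1_j0 : P1 (some j0) = PB (some j1) := by
    simp [hP1, Equiv.swap_apply_left]
  have hP1_j1 : P1 (some j1) = PB (some j0) := by
    simp [hP1, Equiv.swap_apply_right]
  have hP1_other : ∀ j : Fin m, j ≠ j0 → j ≠ j1 → P1 (some j) = PB (some j) := by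
    intro j h0 h1
    rw [hP1]
    simp only [Equiv.trans_apply]
    rw [Equiv.swap_apply_of_ne_of_ne (by simpa using h0) (by simpa using h1)]
  have hP1_none : P1 none = 0 := by
    rw [hP1]
    simp only [Equiv.trans_apply]
    rw [Equiv.swap_apply_of_ne_of_ne (by simp) (by simp), hPB_none]
  have hPU_none : PU none = Fin.last m := by
    simp [hPU, finSuccEquiv_symm_none, Equiv.swap_apply_left]
  have hFB_some : ∀ i : Fin n, FB (some i) = (Fin.rev i).succ := by
    intro i; simp [hFB, finSuccEquiv_symm_some]
  have hFB_none : FB none = 0 := by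
    simp [hFB, finSuccEquiv_symm_none]
  have hF0_i0 : F0 (some i0) = FB (some i1) := by
    simp [hF0, Equiv.swap_apply_left]
  have hF0_i1 : F0 (some i1) = FB (some i0) := by
    simp [hF0, Equiv.swap_apply_right]
  have hF0_none : F0 none = 0 := by
    rw [hF0]
    simp only [Equiv.trans_apply]
    rw [Equiv.swap_apply_of_ne_of_ne (by simp) (by simp), hFB_none]
  have he'_i0 : e' (some i0) = 0 := by
    rw [he']
    simp only [Equiv.trans_apply]
    rw [Equiv.swap_apply_left, hF0_none]
  have he'_i1 : e' (some i1) = FB (some i0) := by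
    rw [he']
    simp only [Equiv.trans_apply]
    rw [Equiv.swap_apply_of_ne_of_ne (by simpa using hne01.symm) (by simp), hF0_i1]
  have he'_none : e' none = FB (some i1) := by
    rw [he']
    simp only [Equiv.trans_apply]
    rw [Equiv.swap_apply_right, hF0_i0]
  -- order facts
  have hPBle : ∀ j j' : Fin m, PB (some j) ≤ PB (some j') ↔ j' ≤ j := by
    intro j j'; rw [hPB_some, hPB_some, Fin.succ_le_succ_iff, Fin.rev_le_rev]
  have hFBle : ∀ i i' : Fin n, FB (some i) ≤ FB (some i') ↔ i' ≤ i := by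
    intro i i'; rw [hFB_some, hFB_some, Fin.succ_le_succ_iff, Fin.rev_le_rev]
  have hFB01 : FB (some i1) < FB (some i0) := by
    rw [hFB_some, hFB_some, Fin.succ_lt_succ_iff, Fin.rev_lt_rev]
    simp [hi0, hi1, Fin.lt_def]
  have hPB_acc : ∀ j : Fin m, PB none < PB (some j) := by
    intro j; rw [hPB_none, hPB_some]; exact Fin.succ_pos _
  have hP1_acc : ∀ j : Fin m, P1 none < P1 (some j) := by
    intro j
    rw [hP1_none]
    refine Fin.pos_iff_ne_zero.mpr fun hc => ?_
    rw [← hP1_none] at hc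
    simpa using P1.injective hc
  have hFB_acc : ∀ i : Fin n, FB none < FB (some i) := by
    intro i; rw [hFB_none, hFB_some]; exact Fin.succ_pos _
  -- maxima facts
  have hPBtop : ∀ j : Fin m, PB (some j) ≤ PB (some j0) := by
    intro j; rw [hPBle]; simp [hj0, Fin.le_def]
  have hPBsnd : ∀ j : Fin m, j ≠ j0 → PB (some j) ≤ PB (some j1) := by
    intro j h
    rw [hPBle]
    have : (j : ℕ) ≠ 0 := by simpa [hj0, Fin.ext_iff] using h
    simp only [hj1, Fin.le_def]
    omega
  have hP1top : ∀ j : Fin m, P1 (some j) ≤ P1 (some j1) := by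
    intro j
    rw [hP1_j1]
    by_cases h0 : j = j0
    · rw [h0, hP1_j0]; exact hPBtop j1
    by_cases h1 : j = j1
    · rw [h1, hP1_j1]
    · rw [hP1_other j h0 h1]; exact hPBtop j
  have hP1snd : ∀ j : Fin m, j ≠ j1 → P1 (some j) ≤ P1 (some j0) := by
    intro j h1
    rw [hP1_j0]
    by_cases h0 : j = j0
    · rw [h0, hP1_j0]
    · rw [hP1_other j h0 h1]; exact hPBsnd j h0
  have hFBtop : ∀ i : Fin n, FB (some i) ≤ FB (some i0) := by
    intro i; rw [hFBle]; simp [hi0, Fin.le_def]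
  -- profile evaluation
  have hpw0 : pw i0 = PB := by rw [hpw]; simp
  have hpw1 : pw i1 = P1 := by rw [hpw]; simp [hne01.symm]
  have hpwU : ∀ w : Fin n, w ≠ i0 → w ≠ i1 → pw w = PU := by
    intro w h0 h1; rw [hpw]; simp [h0, h1]
  have hfp0 : fp j0 = F0 := by rw [hfp]; simp
  have hfpU : ∀ f : Fin m, f ≠ j0 → fp f = FB := by
    intro f h; rw [hfp]; simp [h]
  have hfp'0 : fp' j0 = e' := by rw [hfp']; simp
  have hfp'U : ∀ f : Fin m, f ≠ j0 → fp' f = FB := by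
    intro f h; rw [hfp', Function.update_of_ne h, hfpU f h]
  -- initial state
  set s0 := daInit pw with hs0
  have hs0hold : ∀ f, s0.hold f = none := fun f => rfl
  have hs0un : ∀ w : Fin n, ∀ f, s0.hold f ≠ some w := by
    intro w f; rw [hs0hold]; simp
  have hs0rem0 : s0.rem i0 = Finset.univ := by
    rw [hs0, daInit]
    refine Finset.filter_true_of_mem fun f _ => ?_
    rw [hpw0]
    exact hPB_acc f
  have hs0rem1 : s0.rem i1 = Finset.univ := by
    rw [hs0, daInit]
    refine Finset.filter_true_of_mem fun f _ => ?_
    rw [hpw1]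
    exact hP1_acc f
  have hs0remU : ∀ w : Fin n, w ≠ i0 → w ≠ i1 → s0.rem w = ∅ := by
    intro w h0 h1
    rw [hs0, daInit]
    refine Finset.filter_false_of_mem fun f _ => ?_
    rw [hpwU w h0 h1, hPU_none]
    exact not_lt.mpr (Fin.le_last _)
  -- round-1 proposals (shared by both runs)
  have hprop0 : proposal pw s0 i0 = some j0 := by
    refine proposal_eq_some pw s0 i0 j0 (hs0un i0) (by rw [hs0rem0]; exact Finset.mem_univ _)
      fun f _ => ?_
    rw [hpw0]
    exact hPBtop f
  have hprop1 : proposal pw s0 i1 = some j1 := by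
    refine proposal_eq_some pw s0 i1 j1 (hs0un i1) (by rw [hs0rem1]; exact Finset.mem_univ _)
      fun f _ => ?_
    rw [hpw1]
    exact hP1top f
  have hpropU : ∀ w : Fin n, w ≠ i0 → w ≠ i1 → proposal pw s0 w = none := by
    intro w h0 h1
    exact proposal_eq_none_empty pw s0 w (hs0remU w h0 h1)
  have hprop_inv : ∀ w f, proposal pw s0 w = some f → (w = i0 ∧ f = j0) ∨ (w = i1 ∧ f = j1) := by
    intro w f h
    by_cases h0 : w = i0
    · subst h0; rw [hprop0] at h; exact Or.inl ⟨rfl, (Option.some_injective _ h).symm⟩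
    by_cases h1 : w = i1
    · subst h1; rw [hprop1] at h; exact Or.inr ⟨rfl, (Option.some_injective _ h).symm⟩
    · rw [hpropU w h0 h1] at h; exact absurd h (by simp)
  -- ===== truthful run =====
  set s1 := daStep pw fp s0 with hs1
  have hs1hold : ∀ f, s1.hold f = if f = j0 then some i0 else if f = j1 then some i1 else none := by
    intro f
    by_cases h0 : f = j0
    · subst h0
      rw [if_pos rfl, hs1]
      refine daStep_hold_eq_some pw fp s0 j0 i0
        (Or.inl ⟨hprop0, by rw [hfp0, hF0_i0, hF0_none]; exact hFB_acc i1⟩) fun b hb => ?_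
      rcases hb with ⟨hpb, _⟩ | hb
      · rcases hprop_inv b j0 hpb with ⟨hb0, _⟩ | ⟨_, hj⟩
        · rw [hb0]
        · exact absurd hj hnej
      · rw [hs0hold] at hb; exact absurd hb (by simp)
    by_cases h1 : f = j1
    · subst h1
      rw [if_neg h0, if_pos rfl, hs1]
      refine daStep_hold_eq_some pw fp s0 j1 i1
        (Or.inl ⟨hprop1, by rw [hfpU j1 hnej.symm, hFB_none]; exact hFB_acc i1⟩) fun b hb => ?_
      rcases hb with ⟨hpb, _⟩ | hb
      · rcases hprop_inv b j1 hpb with ⟨_, hj⟩ | ⟨hb1, _⟩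
        · exact absurd hj.symm hnej
        · rw [hb1]
      · rw [hs0hold] at hb; exact absurd hb (by simp)
    · rw [if_neg h0, if_neg h1, hs1]
      refine daStep_hold_eq_none pw fp s0 f (fun w hw => ?_) (hs0hold f)
      rcases hprop_inv w f hw.1 with ⟨_, hj⟩ | ⟨_, hj⟩
      · exact h0 hj
      · exact h1 hj
  have hs1rem : ∀ w, s1.rem w = s0.rem w := by
    intro w
    rw [hs1]
    refine daStep_rem_unchanged pw fp s0 w fun f _ hc => ?_
    rcases hprop_inv w f hc.1 with ⟨hw, hf⟩ | ⟨hw, hf⟩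
    · refine hc.2 ?_
      have := hs1hold f
      rw [hs1] at this
      rw [this, hf, if_pos rfl, hw]
    · refine hc.2 ?_
      have := hs1hold f
      rw [hs1] at this
      rw [this, hf, if_neg hnej.symm, if_pos rfl, hw]
  have hs1un : ∀ w : Fin n, w ≠ i0 → w ≠ i1 → ∀ f, s1.hold f ≠ some w := by
    intro w h0 h1 f
    rw [hs1hold]
    split
    · simp [Ne.symm h0]
    split
    · simp [Ne.symm h1]
    · simp
  have hs1prop : ∀ w, proposal pw s1 w = none := by
    intro w
    by_cases h0 : w = i0
    · subst h0
      exact proposal_eq_none_held pw s1 i0 j0 (by rw [hs1hold, if_pos rfl])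
    by_cases h1 : w = i1
    · subst h1
      exact proposal_eq_none_held pw s1 i1 j1 (by rw [hs1hold, if_neg hnej.symm, if_pos rfl])
    · exact proposal_eq_none_empty pw s1 w (by rw [hs1rem]; exact hs0remU w h0 h1)
  have hfix : daStep pw fp s1 = s1 := by
    refine DAState.ext' (funext fun w => ?_) (funext fun f => ?_)
    · exact daStep_rem_unchanged pw fp s1 w fun f _ hc => by
        rw [hs1prop w] at hc; exact absurd hc.1 (by simp)
    · rw [hs1hold f]
      by_cases h0 : f = j0
      · subst h0
        rw [if_pos rfl]
        refine daStep_hold_eq_some pw fp s1 j0 i0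
          (Or.inr (by rw [hs1hold, if_pos rfl])) fun b hb => ?_
        rcases hb with ⟨hpb, _⟩ | hb
        · rw [hs1prop b] at hpb; exact absurd hpb (by simp)
        · rw [hs1hold, if_pos rfl] at hb
          rw [Option.some_injective _ hb]
      by_cases h1 : f = j1
      · subst h1
        rw [if_neg h0, if_pos rfl]
        refine daStep_hold_eq_some pw fp s1 j1 i1
          (Or.inr (by rw [hs1hold, if_neg h0, if_pos rfl])) fun b hb => ?_
        rcases hb with ⟨hpb, _⟩ | hb
        · rw [hs1prop b] at hpb; exact absurd hpb (by simp)
        · rw [hs1hold, if_neg h0, if_pos rfl] at hb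
          rw [Option.some_injective _ hb]
      · rw [if_neg h0, if_neg h1]
        refine daStep_hold_eq_none pw fp s1 f (fun w hw => ?_)
          (by rw [hs1hold, if_neg h0, if_neg h1])
        rw [hs1prop w] at hw; exact absurd hw.1 (by simp)
  have hT : (daFinal pw fp).hold j0 = some i0 := by
    have h4 : daFinal pw fp = s1 := by
      rw [daFinal, daRun, ← hs0, Function.iterate_add_apply, Function.iterate_one, ← hs1]
      exact Function.iterate_fixed hfix (n * m)
    rw [h4, hs1hold, if_pos rfl]
  -- ===== misreport run =====
  -- step 1
  set t1 := daStep pw fp' s0 with ht1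
  have ht1hold : ∀ f, t1.hold f = if f = j1 then some i1 else none := by
    intro f
    by_cases h1 : f = j1
    · subst h1
      rw [if_pos rfl, ht1]
      refine daStep_hold_eq_some pw fp' s0 j1 i1
        (Or.inl ⟨hprop1, by rw [hfp'U j1 hnej.symm, hFB_none]; exact hFB_acc i1⟩) fun b hb => ?_
      rcases hb with ⟨hpb, _⟩ | hb
      · rcases hprop_inv b j1 hpb with ⟨_, hj⟩ | ⟨hb1, _⟩
        · exact absurd hj.symm hnej
        · rw [hb1]
      · rw [hs0hold] at hb; exact absurd hb (by simp)
    · rw [if_neg h1, ht1]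
      refine daStep_hold_eq_none pw fp' s0 f (fun w hw => ?_) (hs0hold f)
      rcases hprop_inv w f hw.1 with ⟨hw0, hj⟩ | ⟨_, hj⟩
      · subst hj
        have hacc := hw.2
        rw [hw0, hfp'0, he'_i0, he'_none] at hacc
        exact absurd hacc (Fin.not_lt_zero _)
      · exact h1 hj
  have ht1un0 : ∀ f, t1.hold f ≠ some i0 := by
    intro f
    rw [ht1hold]
    split
    · simp [Ne.symm hne01]
    · simp
  have ht1rem0 : t1.rem i0 = Finset.univ.erase j0 := by
    have hr := daStep_rem pw fp' s0 i0
    rw [← ht1] at hr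
    rw [hr, hs0rem0]
    ext f
    simp only [Finset.mem_filter, Finset.mem_erase, Finset.mem_univ, and_true, true_and]
    rw [hprop0]
    constructor
    · intro h hf
      refine h ⟨by rw [hf], ?_⟩
      rw [ht1hold, hf, if_neg hnej]
      simp
    · intro hf hc
      exact hf (Option.some_injective _ hc.1).symm
  have ht1rem1 : t1.rem i1 = Finset.univ := by
    have hr : t1.rem i1 = s0.rem i1 := by
      rw [ht1]
      refine daStep_rem_unchanged pw fp' s0 i1 fun f _ hc => ?_
      rcases hprop_inv i1 f hc.1 with ⟨hw, _⟩ | ⟨_, hf⟩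
      · exact hne01 hw.symm
      · refine hc.2 ?_
        rw [← ht1, ht1hold, hf, if_pos rfl]
    rw [hr, hs0rem1]
  have ht1remU : ∀ w : Fin n, w ≠ i0 → w ≠ i1 → t1.rem w = ∅ := by
    intro w h0 h1
    have hr := daStep_rem pw fp' s0 w
    rw [← ht1] at hr
    rw [hr, hs0remU w h0 h1, Finset.filter_empty]
  -- step 2
  set t2 := daStep pw fp' t1 with ht2
  have hq0 : proposal pw t1 i0 = some j1 := by
    refine proposal_eq_some pw t1 i0 j1 (fun f => ht1un0 f)
      (by rw [ht1rem0]; exact Finset.mem_erase.mpr ⟨hnej.symm, Finset.mem_univ _⟩)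
      fun f hf => ?_
    rw [ht1rem0] at hf
    rw [hpw0]
    exact hPBsnd f (Finset.mem_erase.mp hf).1
  have hq1 : proposal pw t1 i1 = none :=
    proposal_eq_none_held pw t1 i1 j1 (by rw [ht1hold, if_pos rfl])
  have hqU : ∀ w : Fin n, w ≠ i0 → w ≠ i1 → proposal pw t1 w = none := by
    intro w h0 h1
    exact proposal_eq_none_empty pw t1 w (ht1remU w h0 h1)
  have hq_inv : ∀ w f, proposal pw t1 w = some f → w = i0 ∧ f = j1 := by
    intro w f h
    by_cases h0 : w = i0
    · subst h0; rw [hq0] at h; exact ⟨rfl, (Option.some_injective _ h).symm⟩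
    by_cases h1 : w = i1
    · subst h1; rw [hq1] at h; exact absurd h (by simp)
    · rw [hqU w h0 h1] at h; exact absurd h (by simp)
  have ht2hold : ∀ f, t2.hold f = if f = j1 then some i0 else none := by
    intro f
    by_cases h1 : f = j1
    · subst h1
      rw [if_pos rfl, ht2]
      refine daStep_hold_eq_some pw fp' t1 j1 i0
        (Or.inl ⟨hq0, by rw [hfp'U j1 hnej.symm, hFB_none]; exact hFB_acc i0⟩) fun b hb => ?_
      rcases hb with ⟨hpb, _⟩ | hb
      · rw [(hq_inv b j1 hpb).1]
      · rw [ht1hold, if_pos rfl] at hb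
        rw [← Option.some_injective _ hb, hfp'U j1 hnej.symm]
        exact le_of_lt hFB01
    · rw [if_neg h1, ht2]
      refine daStep_hold_eq_none pw fp' t1 f (fun w hw => h1 (hq_inv w f hw.1).2)
        (by rw [ht1hold, if_neg h1])
  have ht2un1 : ∀ f, t2.hold f ≠ some i1 := by
    intro f
    rw [ht2hold]
    split
    · simp [hne01]
    · simp
  have ht2rem0 : t2.rem i0 = Finset.univ.erase j0 := by
    have hr : t2.rem i0 = t1.rem i0 := by
      rw [ht2]
      refine daStep_rem_unchanged pw fp' t1 i0 fun f _ hc => ?_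
      obtain ⟨_, hf⟩ := hq_inv i0 f hc.1
      refine hc.2 ?_
      rw [← ht2, ht2hold, hf, if_pos rfl]
    rw [hr, ht1rem0]
  have ht2rem1 : t2.rem i1 = Finset.univ := by
    have hr : t2.rem i1 = t1.rem i1 := by
      rw [ht2]
      refine daStep_rem_unchanged pw fp' t1 i1 fun f _ hc => ?_
      rw [hq1] at hc
      exact absurd hc.1 (by simp)
    rw [hr, ht1rem1]
  have ht2remU : ∀ w : Fin n, w ≠ i0 → w ≠ i1 → t2.rem w = ∅ := by
    intro w h0 h1
    have hr := daStep_rem pw fp' t1 w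
    rw [← ht2] at hr
    rw [hr, ht1remU w h0 h1, Finset.filter_empty]
  -- step 3
  set t3 := daStep pw fp' t2 with ht3
  have hr0 : proposal pw t2 i0 = none :=
    proposal_eq_none_held pw t2 i0 j1 (by rw [ht2hold, if_pos rfl])
  have hr1 : proposal pw t2 i1 = some j1 := by
    refine proposal_eq_some pw t2 i1 j1 (fun f => ht2un1 f)
      (by rw [ht2rem1]; exact Finset.mem_univ _) fun f _ => ?_
    rw [hpw1]
    exact hP1top f
  have hrU : ∀ w : Fin n, w ≠ i0 → w ≠ i1 → proposal pw t2 w = none := by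
    intro w h0 h1
    exact proposal_eq_none_empty pw t2 w (ht2remU w h0 h1)
  have hr_inv : ∀ w f, proposal pw t2 w = some f → w = i1 ∧ f = j1 := by
    intro w f h
    by_cases h0 : w = i0
    · subst h0; rw [hr0] at h; exact absurd h (by simp)
    by_cases h1 : w = i1
    · subst h1; rw [hr1] at h; exact ⟨rfl, (Option.some_injective _ h).symm⟩
    · rw [hrU w h0 h1] at h; exact absurd h (by simp)
  have ht3hold : ∀ f, t3.hold f = if f = j1 then some i0 else none := by
    intro f
    by_cases h1 : f = j1
    · subst h1
      rw [if_pos rfl, ht3]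
      refine daStep_hold_eq_some pw fp' t2 j1 i0
        (Or.inr (by rw [ht2hold, if_pos rfl])) fun b hb => ?_
      rcases hb with ⟨hpb, _⟩ | hb
      · rw [(hr_inv b j1 hpb).1, hfp'U j1 hnej.symm]
        exact le_of_lt hFB01
      · rw [ht2hold, if_pos rfl] at hb
        rw [Option.some_injective _ hb]
    · rw [if_neg h1, ht3]
      refine daStep_hold_eq_none pw fp' t2 f (fun w hw => h1 (hr_inv w f hw.1).2)
        (by rw [ht2hold, if_neg h1])
  have ht3un1 : ∀ f, t3.hold f ≠ some i1 := by
    intro f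
    rw [ht3hold]
    split
    · simp [hne01]
    · simp
  have ht3rem0 : t3.rem i0 = Finset.univ.erase j0 := by
    have hr : t3.rem i0 = t2.rem i0 := by
      rw [ht3]
      refine daStep_rem_unchanged pw fp' t2 i0 fun f _ hc => ?_
      rw [hr0] at hc
      exact absurd hc.1 (by simp)
    rw [hr, ht2rem0]
  have ht3rem1 : t3.rem i1 = Finset.univ.erase j1 := by
    have hr := daStep_rem pw fp' t2 i1
    rw [← ht3] at hr
    rw [hr, ht2rem1]
    ext f
    simp only [Finset.mem_filter, Finset.mem_erase, Finset.mem_univ, and_true, true_and]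
    rw [hr1]
    constructor
    · intro h hf
      refine h ⟨by rw [hf], ?_⟩
      rw [ht3hold, hf, if_pos rfl]
      simp [hne01]
    · intro hf hc
      exact hf (Option.some_injective _ hc.1).symm
  have ht3remU : ∀ w : Fin n, w ≠ i0 → w ≠ i1 → t3.rem w = ∅ := by
    intro w h0 h1
    have hr := daStep_rem pw fp' t2 w
    rw [← ht3] at hr
    rw [hr, ht2remU w h0 h1, Finset.filter_empty]
  -- step 4
  set t4 := daStep pw fp' t3 with ht4
  have hv0 : proposal pw t3 i0 = none :=
    proposal_eq_none_held pw t3 i0 j1 (by rw [ht3hold, if_pos rfl])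
  have hv1 : proposal pw t3 i1 = some j0 := by
    refine proposal_eq_some pw t3 i1 j0 (fun f => ht3un1 f)
      (by rw [ht3rem1]; exact Finset.mem_erase.mpr ⟨hnej, Finset.mem_univ _⟩)
      fun f hf => ?_
    rw [ht3rem1] at hf
    rw [hpw1]
    exact hP1snd f (Finset.mem_erase.mp hf).1
  have hvU : ∀ w : Fin n, w ≠ i0 → w ≠ i1 → proposal pw t3 w = none := by
    intro w h0 h1
    exact proposal_eq_none_empty pw t3 w (ht3remU w h0 h1)
  have hv_inv : ∀ w f, proposal pw t3 w = some f → w = i1 ∧ f = j0 := by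
    intro w f h
    by_cases h0 : w = i0
    · subst h0; rw [hv0] at h; exact absurd h (by simp)
    by_cases h1 : w = i1
    · subst h1; rw [hv1] at h; exact ⟨rfl, (Option.some_injective _ h).symm⟩
    · rw [hvU w h0 h1] at h; exact absurd h (by simp)
  have ht4hold : ∀ f, t4.hold f = if f = j0 then some i1 else if f = j1 then some i0 else none := by
    intro f
    by_cases h0 : f = j0
    · subst h0
      rw [if_pos rfl, ht4]
      refine daStep_hold_eq_some pw fp' t3 j0 i1
        (Or.inl ⟨hv1, by rw [hfp'0, he'_i1, he'_none]; exact hFB01⟩) fun b hb => ?_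
      rcases hb with ⟨hpb, _⟩ | hb
      · rw [(hv_inv b j0 hpb).1]
      · rw [ht3hold, if_neg hnej] at hb
        exact absurd hb (by simp)
    by_cases h1 : f = j1
    · subst h1
      rw [if_neg h0, if_pos rfl, ht4]
      refine daStep_hold_eq_some pw fp' t3 j1 i0
        (Or.inr (by rw [ht3hold, if_pos rfl])) fun b hb => ?_
      rcases hb with ⟨hpb, _⟩ | hb
      · exact absurd (hv_inv b j1 hpb).2 h0
      · rw [ht3hold, if_pos rfl] at hb
        rw [Option.some_injective _ hb]
    · rw [if_neg h0, if_neg h1, ht4]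
      refine daStep_hold_eq_none pw fp' t3 f (fun w hw => h0 (hv_inv w f hw.1).2)
        (by rw [ht3hold, if_neg h1])
  have ht4rem : ∀ w, t4.rem w = t3.rem w := by
    intro w
    rw [ht4]
    refine daStep_rem_unchanged pw fp' t3 w fun f _ hc => ?_
    obtain ⟨hw, hf⟩ := hv_inv w f hc.1
    refine hc.2 ?_
    rw [← ht4, ht4hold, hf, if_pos rfl, hw]
  -- fixed point
  have ht4prop : ∀ w, proposal pw t4 w = none := by
    intro w
    by_cases h0 : w = i0
    · subst h0
      exact proposal_eq_none_held pw t4 i0 j1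
        (by rw [ht4hold, if_neg hnej.symm, if_pos rfl])
    by_cases h1 : w = i1
    · subst h1
      exact proposal_eq_none_held pw t4 i1 j0 (by rw [ht4hold, if_pos rfl])
    · refine proposal_eq_none_empty pw t4 w ?_
      rw [ht4rem]
      exact ht3remU w h0 h1
  have hfix' : daStep pw fp' t4 = t4 := by
    refine DAState.ext' (funext fun w => ?_) (funext fun f => ?_)
    · exact daStep_rem_unchanged pw fp' t4 w fun f _ hc => by
        rw [ht4prop w] at hc; exact absurd hc.1 (by simp)
    · rw [ht4hold f]
      by_cases h0 : f = j0
      · subst h0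
        rw [if_pos rfl]
        refine daStep_hold_eq_some pw fp' t4 j0 i1
          (Or.inr (by rw [ht4hold, if_pos rfl])) fun b hb => ?_
        rcases hb with ⟨hpb, _⟩ | hb
        · rw [ht4prop b] at hpb; exact absurd hpb (by simp)
        · rw [ht4hold, if_pos rfl] at hb
          rw [Option.some_injective _ hb]
      by_cases h1 : f = j1
      · subst h1
        rw [if_neg h0, if_pos rfl]
        refine daStep_hold_eq_some pw fp' t4 j1 i0
          (Or.inr (by rw [ht4hold, if_neg h0, if_pos rfl])) fun b hb => ?_
        rcases hb with ⟨hpb, _⟩ | hb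
        · rw [ht4prop b] at hpb; exact absurd hpb (by simp)
        · rw [ht4hold, if_neg h0, if_pos rfl] at hb
          rw [Option.some_injective _ hb]
      · rw [if_neg h0, if_neg h1]
        refine daStep_hold_eq_none pw fp' t4 f (fun w hw => ?_)
          (by rw [ht4hold, if_neg h0, if_neg h1])
        rw [ht4prop w] at hw; exact absurd hw.1 (by simp)
  have hM : (daFinal pw fp').hold j0 = some i1 := by
    have e4 : (daStep pw fp')^[4] s0 = t4 := by
      rw [show (4 : ℕ) = 3 + 1 from rfl, Function.iterate_succ_apply, ← ht1,
        show (3 : ℕ) = 2 + 1 from rfl, Function.iterate_succ_apply, ← ht2,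
        show (2 : ℕ) = 1 + 1 from rfl, Function.iterate_succ_apply, ← ht3,
        Function.iterate_one, ← ht4]
    have h4 : daFinal pw fp' = t4 := by
      rw [daFinal, daRun, ← hs0]
      have hnm4 : 4 ≤ n * m := le_trans (by norm_num) (Nat.mul_le_mul hn hm)
      have hsplit : n * m + 1 = (n * m - 3) + 4 := by omega
      rw [hsplit, Function.iterate_add_apply, e4]
      exact Function.iterate_fixed hfix' _
    rw [h4, ht4hold, if_pos rfl]
  -- conclusion
  rw [hM, hT, hfp0, hF0_i1, hF0_i0]
  exact hFB01
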